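/- (Irreflexivity of the prefix relation on the free left-distributive algebra.) Let A be the free left-distributive algebra on one generator. For every k ≥ 1 and all P, Q_1, …, Q_k ∈ A, P ≠ (((P·Q_1)·Q_2)·…)·Q_k. Consequently the relation <_L, where P <_L Q iff Q = (((P·Q_1)·…)·Q_k for some Q_1, …, Q_k with k ≥ 1, is irreflexive on A. -/

import Mathlib

/-- The left-distributivity pairs `(a(bc), (ab)(ac))` in the free magma on one generator. -/
inductive LDPair : FreeMagma Unit → FreeMagma Unit → Prop
  | mk (a b c : FreeMagma Unit) : LDPair (a * (b * c)) ((a * b) * (a * c))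

/-- The smallest congruence on the free magma on one generator containing the
left-distributivity pairs. -/
def ldCon : Con (FreeMagma Unit) := conGen LDPair

/-- The free left-distributive algebra `A` on one generator. -/
abbrev FreeLD : Type := ldCon.Quotient

/-- The generator `x` of the free left-distributive algebra. -/
def ldGen : FreeLD := (FreeMagma.of () : FreeMagma Unit)

namespace LDIrr
open FreeGroup List


abbrev F := FreeGroup ℕ
abbrev Wd := List (ℕ × Bool)

/-- non-cancelling adjacent pair -/
def NC (a b : ℕ × Bool) : Prop := a.1 = b.1 → a.2 = b.2

/-- a word is reduced -/
def IsRed (L : Wd) : Prop := List.IsChain NC L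

lemma isRed_nil : IsRed ([] : Wd) := List.isChain_nil

lemma isRed_reduce (L : Wd) : IsRed (FreeGroup.reduce L) := by
  induction L with
  | nil => exact isRed_nil
  | cons x L ih =>
    rw [FreeGroup.reduce.cons]
    rcases h : FreeGroup.reduce L with _ | ⟨hd, tl⟩
    · exact List.isChain_singleton _
    · rw [h] at ih
      show IsRed (if x.1 = hd.1 ∧ x.2 = !hd.2 then tl else x :: hd :: tl)
      by_cases hc : x.1 = hd.1 ∧ x.2 = !hd.2
      · simpa [hc, IsRed] using ih.tail
      · rw [if_neg hc]
        refine List.isChain_cons_cons.2 ⟨?_, ih⟩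
        intro h1
        by_contra h2
        exact hc ⟨h1, by revert h2; cases x.2 <;> cases hd.2 <;> simp⟩

lemma reduce_eq_self {L : Wd} (h : IsRed L) : FreeGroup.reduce L = L := by
  induction L with
  | nil => rfl
  | cons x L ih =>
    rw [FreeGroup.reduce.cons, ih h.tail]
    rcases hL : L with _ | ⟨hd, tl⟩
    · rfl
    · have hnc : NC x hd := by
        rw [hL] at h; exact (List.isChain_cons_cons.1 h).1
      show (if x.1 = hd.1 ∧ x.2 = !hd.2 then tl else x :: hd :: tl) = x :: hd :: tl
      rw [if_neg]
      rintro ⟨h1, h2⟩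
      rw [hnc h1] at h2
      cases hd.2 <;> simp at h2

lemma isRed_toWord (g : F) : IsRed g.toWord := by
  rw [← FreeGroup.reduce_toWord]; exact isRed_reduce _

lemma toWord_mk' {L : Wd} (h : IsRed L) : (FreeGroup.mk L).toWord = L := by
  rw [FreeGroup.toWord_mk, reduce_eq_self h]

lemma isRed_infix {L w : Wd} (h : IsRed L) (hw : w <:+: L) : IsRed w := by
  obtain ⟨s, t, rfl⟩ := hw
  exact (h.left_of_append).right_of_append

/-- junction compatibility of two words -/
def J (u v : Wd) : Prop := ∀ x ∈ u.getLast?, ∀ y ∈ v.head?, NC x y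

lemma prod_mk (ws : List Wd) : (ws.map FreeGroup.mk).prod = FreeGroup.mk ws.flatten := by
  induction ws with
  | nil => simp [FreeGroup.one_eq_mk]
  | cons w ws ih => simp [ih, FreeGroup.mul_mk]

lemma isRed_flatten {ws : List Wd} (h0 : ∀ w ∈ ws, w ≠ [])
    (h1 : ∀ w ∈ ws, IsRed w) (h2 : List.IsChain J ws) : IsRed ws.flatten := by
  have : ([] : Wd) ∉ ws := fun h => h0 _ h rfl
  exact (List.isChain_flatten this).2 ⟨h1, h2⟩

lemma toWord_prod (ws : List Wd) (h0 : ∀ w ∈ ws, w ≠ [])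
    (h1 : ∀ w ∈ ws, IsRed w) (h2 : List.IsChain J ws) :
    ((ws.map FreeGroup.mk).prod).toWord = ws.flatten := by
  rw [prod_mk, toWord_mk' (isRed_flatten h0 h1 h2)]

lemma junctions_of_isRed_flatten {ws : List Wd} (h0 : ∀ w ∈ ws, w ≠ [])
    (h : IsRed ws.flatten) : List.IsChain J ws := by
  have : ([] : Wd) ∉ ws := fun h => h0 _ h rfl
  exact ((List.isChain_flatten this).1 h).2




def runs : Wd → List Wd
  | [] => []
  | a :: L =>
    if a.1 = 0 then [a] :: runs L
    else ((a :: L).takeWhile (fun x => x.1 != 0)) ::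
      runs ((a :: L).dropWhile (fun x => x.1 != 0))
termination_by L => L.length
decreasing_by
  · simp
  · rw [List.dropWhile_cons, if_pos (by simpa using ‹¬ a.1 = 0›)]
    have h1 := (List.dropWhile_sublist (l := L) (p := fun x => x.1 != 0)).length_le
    simp only [List.length_cons]
    omega

lemma runs_nil : runs [] = [] := by rw [runs.eq_def]

lemma runs_cons_zero {a : ℕ × Bool} (L : Wd) (h : a.1 = 0) :
    runs (a :: L) = [a] :: runs L := by rw [runs.eq_def]; simp only [if_pos h]

lemma runs_cons_ne {a : ℕ × Bool} (L : Wd) (h : ¬ a.1 = 0) :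
    runs (a :: L) = ((a :: L).takeWhile (fun x => x.1 != 0)) ::
      runs ((a :: L).dropWhile (fun x => x.1 != 0)) := by
  rw [runs.eq_def]; simp only [if_neg h]

def isL (w : Wd) : Prop := ∃ ε, w = [((0:ℕ), ε)]

lemma isL_of {a : ℕ × Bool} (h : a.1 = 0) : isL [a] := by
  cases a with
  | mk x y => exact ⟨y, by simp at h; simp [h]⟩

lemma runs_flatten (L : Wd) : (runs L).flatten = L := by
  induction L using runs.induct with
  | case1 => simp [runs_nil]
  | case2 a L h ih =>
    rw [runs_cons_zero L h]
    simpa using ih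
  | case3 a L h ih =>
    rw [runs_cons_ne L h]
    simp only [List.flatten_cons, ih]
    exact List.takeWhile_append_dropWhile

lemma runs_ne_nil (L : Wd) : ∀ w ∈ runs L, w ≠ [] := by
  induction L using runs.induct with
  | case1 => simp [runs_nil]
  | case2 a L h ih =>
    rw [runs_cons_zero L h]
    intro w hw
    rcases List.mem_cons.1 hw with rfl | hw
    · simp
    · exact ih w hw
  | case3 a L h ih =>
    rw [runs_cons_ne L h]
    intro w hw
    rcases List.mem_cons.1 hw with rfl | hw
    · simp [List.takeWhile_cons, show (a.1 != 0) = true by simpa using h]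
    · exact ih w hw

lemma runs_kinds (L : Wd) : ∀ w ∈ runs L, isL w ∨ (∀ x ∈ w, x.1 ≠ 0) := by
  induction L using runs.induct with
  | case1 => simp [runs_nil]
  | case2 a L h ih =>
    rw [runs_cons_zero L h]
    intro w hw
    rcases List.mem_cons.1 hw with rfl | hw
    · exact Or.inl (isL_of h)
    · exact ih w hw
  | case3 a L h ih =>
    rw [runs_cons_ne L h]
    intro w hw
    rcases List.mem_cons.1 hw with rfl | hw
    · refine Or.inr fun x hx => ?_
      have := List.mem_takeWhile_imp hx
      simpa using this
    · exact ih w hw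

lemma head_dropWhile_zero (L : Wd) (x : ℕ × Bool)
    (hx : (L.dropWhile (fun x => x.1 != 0)).head? = some x) : x.1 = 0 := by
  induction L with
  | nil => simp at hx
  | cons a L ih =>
    rw [List.dropWhile_cons] at hx
    by_cases h : a.1 = 0
    · rw [if_neg (by simpa using h)] at hx
      simp only [List.head?_cons, Option.some_inj] at hx
      rw [← hx]; exact h
    · rw [if_pos (by simpa using h)] at hx
      exact ih hx

lemma runs_head_isL {L : Wd} {x : ℕ × Bool} (hL : L.head? = some x) (hx : x.1 = 0)
    {w : Wd} (hw : (runs L).head? = some w) : isL w := by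
  rcases L with _ | ⟨a, L⟩
  · simp at hL
  · simp only [List.head?_cons, Option.some_inj] at hL
    subst hL
    rw [runs_cons_zero L hx] at hw
    simp only [List.head?_cons, Option.some_inj] at hw
    rw [← hw]
    exact isL_of hx

lemma runs_alt (L : Wd) : List.IsChain (fun u v => isL u ∨ isL v) (runs L) := by
  induction L using runs.induct with
  | case1 => simp [runs_nil]
  | case2 a L h ih =>
    rw [runs_cons_zero L h]
    exact List.isChain_cons.2 ⟨fun y _ => Or.inl (isL_of h), ih⟩
  | case3 a L h ih =>
    rw [runs_cons_ne L h]
    refine List.isChain_cons.2 ⟨fun y hy => ?_, ih⟩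
    refine Or.inr ?_
    rcases hL'' : (a :: L).dropWhile (fun x => x.1 != 0) with _ | ⟨b, L''⟩
    · rw [hL''] at hy; simp [runs_nil] at hy
    · have hb : b.1 = 0 := head_dropWhile_zero (a :: L) b (by rw [hL'']; rfl)
      rw [hL''] at hy
      exact runs_head_isL (by rfl) hb hy




def aimg (i k : ℕ) : F :=
  if k = i then of i * of (i+1) * (of i)⁻¹ else if k = i+1 then of i else of k

def bimg (i k : ℕ) : F :=
  if k = i then of (i+1) else if k = i+1 then (of (i+1))⁻¹ * of i * of (i+1) else of k

lemma aimg_self (i : ℕ) : aimg i i = of i * of (i+1) * (of i)⁻¹ := if_pos rfl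
lemma aimg_succ (i : ℕ) : aimg i (i+1) = of i := by
  rw [aimg, if_neg (by omega), if_pos rfl]
lemma aimg_other {i k : ℕ} (h1 : k ≠ i) (h2 : k ≠ i+1) : aimg i k = of k := by
  rw [aimg, if_neg h1, if_neg h2]
lemma bimg_self (i : ℕ) : bimg i i = of (i+1) := if_pos rfl
lemma bimg_succ (i : ℕ) : bimg i (i+1) = (of (i+1))⁻¹ * of i * of (i+1) := by
  rw [bimg, if_neg (by omega), if_pos rfl]
lemma bimg_other {i k : ℕ} (h1 : k ≠ i) (h2 : k ≠ i+1) : bimg i k = of k := by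
  rw [bimg, if_neg h1, if_neg h2]

def artHom (i : ℕ) : F →* F := FreeGroup.lift (aimg i)
def artInv (i : ℕ) : F →* F := FreeGroup.lift (bimg i)

lemma artHom_of (i k : ℕ) : artHom i (of k) = aimg i k := FreeGroup.lift_apply_of
lemma artInv_of (i k : ℕ) : artInv i (of k) = bimg i k := FreeGroup.lift_apply_of

lemma artComp1 (i : ℕ) : (artHom i).comp (artInv i) = MonoidHom.id F := by
  refine FreeGroup.ext_hom _ _ fun k => ?_
  simp only [MonoidHom.comp_apply, MonoidHom.id_apply, artInv_of]
  by_cases h1 : k = i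
  · subst k; rw [bimg_self, artHom_of, aimg_succ]
  by_cases h2 : k = i+1
  · subst k
    rw [bimg_succ]
    simp only [_root_.map_mul, _root_.map_inv, artHom_of, aimg_self, aimg_succ]
    group
  · rw [bimg_other h1 h2, artHom_of, aimg_other h1 h2]

lemma artComp2 (i : ℕ) : (artInv i).comp (artHom i) = MonoidHom.id F := by
  refine FreeGroup.ext_hom _ _ fun k => ?_
  simp only [MonoidHom.comp_apply, MonoidHom.id_apply, artHom_of]
  by_cases h1 : k = i
  · subst k
    rw [aimg_self]
    simp only [_root_.map_mul, _root_.map_inv, artInv_of, bimg_self, bimg_succ]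
    group
  by_cases h2 : k = i+1
  · subst k; rw [aimg_succ, artInv_of, bimg_self]
  · rw [aimg_other h1 h2, artInv_of, bimg_other h1 h2]

def artAut (i : ℕ) : F ≃* F :=
  MonoidHom.toMulEquiv (artHom i) (artInv i) (artComp2 i) (artComp1 i)

lemma artAut_of (i k : ℕ) : artAut i (of k) = aimg i k := FreeGroup.lift_apply_of
lemma artAut_symm_of (i k : ℕ) : (artAut i).symm (of k) = bimg i k := FreeGroup.lift_apply_of

lemma mulAut_ext {f g : F ≃* F} (h : ∀ k, f (of k) = g (of k)) : f = g :=
  MulEquiv.toMonoidHom_injective (FreeGroup.ext_hom _ _ h)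

lemma braid_rel (i : ℕ) :
    artAut i * artAut (i+1) * artAut i = artAut (i+1) * artAut i * artAut (i+1) := by
  refine mulAut_ext fun k => ?_
  simp only [MulAut.mul_apply]
  by_cases h1 : k = i
  · subst k
    simp only [artAut_of, aimg_self, _root_.map_mul, _root_.map_inv, artAut_of,
      aimg_other (show i ≠ i+1 by omega) (show i ≠ i+1+1 by omega),
      aimg_other (show i+1+1 ≠ i by omega) (show i+1+1 ≠ i+1 by omega),
      aimg_succ, aimg_self]
    group
  by_cases h2 : k = i+1
  · subst k
    simp only [artAut_of, aimg_succ, aimg_self, _root_.map_mul, _root_.map_inv,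
      aimg_other (show i ≠ i+1 by omega) (show i ≠ i+1+1 by omega),
      aimg_other (show i+1+1 ≠ i by omega) (show i+1+1 ≠ i+1 by omega)]
  by_cases h3 : k = i+2
  · subst k
    simp only [artAut_of, aimg_other (show i+2 ≠ i by omega) (show i+2 ≠ i+1 by omega),
      show i+2 = i+1+1 from rfl, aimg_succ, _root_.map_mul, _root_.map_inv, aimg_self,
      aimg_other (show i ≠ i+1 by omega) (show i ≠ i+1+1 by omega)]
  · have e1 : k ≠ i+1+1 := by omega
    simp only [artAut_of, aimg_other h1 h2, aimg_other h2 e1, aimg_other h1 h2]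

lemma comm_rel {i j : ℕ} (h : i + 2 ≤ j) :
    artAut i * artAut j = artAut j * artAut i := by
  refine mulAut_ext fun k => ?_
  simp only [MulAut.mul_apply]
  by_cases h1 : k = i
  · subst k
    simp only [artAut_of, aimg_other (show i ≠ j by omega) (show i ≠ j+1 by omega), aimg_self,
      _root_.map_mul, _root_.map_inv,
      aimg_other (show i+1 ≠ j by omega) (show i+1 ≠ j+1 by omega)]
  by_cases h2 : k = i+1
  · subst k
    simp only [artAut_of, aimg_other (show i+1 ≠ j by omega) (show i+1 ≠ j+1 by omega), aimg_succ,
      aimg_other (show i ≠ j by omega) (show i ≠ j+1 by omega)]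
  by_cases h3 : k = j
  · subst k
    simp only [artAut_of, aimg_other (show j ≠ i by omega) (show j ≠ i+1 by omega), aimg_self,
      _root_.map_mul, _root_.map_inv,
      aimg_other (show j+1 ≠ i by omega) (show j+1 ≠ i+1 by omega)]
  by_cases h4 : k = j+1
  · subst k
    simp only [artAut_of, aimg_other (show j+1 ≠ i by omega) (show j+1 ≠ i+1 by omega), aimg_succ,
      aimg_other (show j ≠ i by omega) (show j ≠ i+1 by omega)]
  · simp only [artAut_of, aimg_other h1 h2, aimg_other h3 h4]


lemma NC_of_ne {x y : ℕ × Bool} (h : x.1 ≠ y.1) : NC x y := fun h' => absurd h' h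

/-- all letters of the reduced word of `g` have index different from `n` -/
def ZF (n : ℕ) (g : F) : Prop := ∀ x ∈ g.toWord, x.1 ≠ n

lemma ZF.one (n : ℕ) : ZF n (1 : F) := by intro x hx; rw [FreeGroup.toWord_one] at hx; simp at hx

lemma ZF.mul {n : ℕ} {a b : F} (ha : ZF n a) (hb : ZF n b) : ZF n (a * b) := by
  intro x hx
  have := (FreeGroup.toWord_mul_sublist a b).subset hx
  rcases List.mem_append.1 this with h | h
  · exact ha x h
  · exact hb x h

lemma ZF.inv {n : ℕ} {a : F} (ha : ZF n a) : ZF n a⁻¹ := by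
  intro x hx
  rw [FreeGroup.toWord_inv] at hx
  simp only [FreeGroup.invRev, List.mem_reverse, List.mem_map] at hx
  obtain ⟨y, hy, rfl⟩ := hx
  exact ha y hy

lemma ZF.of {n k : ℕ} (h : k ≠ n) : ZF n (of k) := by
  intro x hx
  rw [FreeGroup.toWord_of] at hx
  simp at hx
  subst hx
  simpa using h

lemma mk_single_true (k : ℕ) : FreeGroup.mk [(k, true)] = of k := rfl

lemma mk_single_false (k : ℕ) : FreeGroup.mk [(k, false)] = (of k)⁻¹ := by
  rw [← mk_single_true, FreeGroup.inv_mk]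
  simp [FreeGroup.invRev]

lemma ZF_chunk {n : ℕ} (ψ : F →* F) (hψ : ∀ k, k ≠ 0 → ZF n (ψ (of k)))
    (w : Wd) (hw : ∀ x ∈ w, x.1 ≠ 0) : ZF n (ψ (FreeGroup.mk w)) := by
  induction w with
  | nil =>
    rw [show FreeGroup.mk [] = (1 : F) from (FreeGroup.one_eq_mk).symm, _root_.map_one]
    exact ZF.one n
  | cons a w ih =>
    rw [show (a :: w) = [a] ++ w from rfl, ← FreeGroup.mul_mk, _root_.map_mul]
    refine ZF.mul ?_ (ih fun x hx => hw x (List.mem_cons_of_mem a hx))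
    have ha : a.1 ≠ 0 := hw a (List.mem_cons_self)
    rcases a with ⟨k, _ | _⟩
    · rw [mk_single_false, _root_.map_inv]
      exact (hψ k ha).inv
    · rw [mk_single_true]
      exact hψ k ha

/-- the key invariant: reduced word starts with `x₀` and ends with `x₀⁻¹` -/
def Inv (g : F) : Prop :=
  g.toWord.head? = some (0, true) ∧ g.toWord.getLast? = some (0, false)

lemma runs_first {L : Wd} {x : ℕ × Bool} (hL : L.head? = some x) (hx : x.1 = 0) :
    (runs L).head? = some [x] := by
  rcases L with _ | ⟨a, L⟩
  · simp at hL
  · simp only [List.head?_cons, Option.some_inj] at hL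
    subst hL
    rw [runs_cons_zero L hx]
    rfl

lemma getLast?_flatten_of_ne_nil {ws : List Wd} {w : Wd} (hws : ws.getLast? = some w)
    (hw : w ≠ []) : ws.flatten.getLast? = w.getLast? := by
  have hne : ws ≠ [] := by rintro rfl; simp at hws
  have hdec : ws.dropLast ++ [ws.getLast hne] = ws := List.dropLast_append_getLast hne
  have hwl : ws.getLast hne = w := by
    rw [List.getLast?_eq_getLast hne, Option.some_inj] at hws; exact hws
  conv_lhs => rw [← hdec, hwl]
  rw [List.flatten_append, List.flatten_cons, List.flatten_nil, List.append_nil,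
    List.getLast?_append_of_ne_nil _ hw]

lemma runs_last {L : Wd} {x : ℕ × Bool} (hL : L.getLast? = some x) (hx : x.1 = 0) :
    (runs L).getLast? = some [x] := by
  have hLne : L ≠ [] := by rintro rfl; simp at hL
  have hrne : runs L ≠ [] := by
    intro h
    apply hLne
    rw [← runs_flatten L, h]; rfl
  rcases h : (runs L).getLast? with _ | w
  · exact absurd (List.getLast?_eq_none_iff.1 h) hrne
  have hweq : w = (runs L).getLast hrne := by
    rw [List.getLast?_eq_getLast hrne, Option.some_inj] at h; exact h.symm
  have hwmem : w ∈ runs L := hweq ▸ List.getLast_mem hrne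
  have hwne : w ≠ [] := runs_ne_nil L w hwmem
  have hlast : w.getLast? = some x := by
    rw [← getLast?_flatten_of_ne_nil h hwne, runs_flatten L]; exact hL
  rcases runs_kinds L w hwmem with ⟨ε, hwe⟩ | hcf
  · rw [hwe] at hlast
    simp only [List.getLast?_singleton, Option.some_inj] at hlast
    rw [hwe, ← hlast]
  · exfalso
    refine hcf x ?_ hx
    rw [List.getLast?_eq_getLast hwne, Option.some_inj] at hlast
    rw [← hlast]
    exact List.getLast_mem _

lemma chain'_conj {α : Type*} {R S : α → α → Prop} {l : List α}
    (hR : List.IsChain R l) (hS : List.IsChain S l) :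
    List.IsChain (fun a b => R a b ∧ S a b) l := by
  induction l with
  | nil => exact List.isChain_nil
  | cons a l ih =>
    rw [List.isChain_cons] at hR hS ⊢
    exact ⟨fun y hy => ⟨hR.1 y hy, hS.1 y hy⟩, ih hR.2 hS.2⟩

lemma chain'_imp_mem {α : Type*} {R S : α → α → Prop} {P : α → Prop} {l : List α}
    (h : List.IsChain R l) (hP : ∀ a ∈ l, P a)
    (H : ∀ a b, P a → P b → R a b → S a b) : List.IsChain S l := by
  induction l with
  | nil => exact List.isChain_nil
  | cons a l ih =>
    rw [List.isChain_cons] at h ⊢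
    constructor
    · intro y hy
      exact H a y (hP a (List.mem_cons_self))
        (hP y (List.mem_cons_of_mem a (List.mem_of_mem_head? hy))) (h.1 y hy)
    · exact ih h.2 fun b hb => hP b (List.mem_cons_of_mem a hb)

lemma head?_flatten_of_ne_nil {ws : List Wd} {w : Wd} (hws : ws.head? = some w)
    (hw : w ≠ []) : ws.flatten.head? = w.head? := by
  rcases ws with _ | ⟨w0, rest⟩
  · simp at hws
  · simp only [List.head?_cons, Option.some_inj] at hws
    subst hws
    rw [List.flatten_cons, List.head?_append_of_ne_nil _ hw]

/-- the letter pieces are mapped to single letters -/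
lemma img_letter (ψ : F ≃* F) (h0 : ψ (of 0) = of 0) (ε : Bool) :
    (ψ (FreeGroup.mk [((0:ℕ), ε)])).toWord = [((0:ℕ), ε)] := by
  cases ε
  · rw [mk_single_false, _root_.map_inv, h0, FreeGroup.toWord_inv, FreeGroup.toWord_of]
    simp [FreeGroup.invRev]
  · rw [mk_single_true, h0, FreeGroup.toWord_of]

lemma image_inv (ψ : F ≃* F) (h0 : ψ (of 0) = of 0)
    (hj : ∀ k, k ≠ 0 → ZF 0 (ψ (of k))) {g : F} (hg : Inv g) : Inv (ψ g) := by
  obtain ⟨hhead, hlast⟩ := hg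
  have hzf : ∀ w : Wd, (∀ x ∈ w, x.1 ≠ 0) → ZF 0 (ψ (FreeGroup.mk w)) := by
    intro w hw
    have := ZF_chunk (n := 0) ψ.toMonoidHom (by simpa using hj) w hw
    simpa using this
  set L := g.toWord with hLdef
  have hLred : IsRed L := isRed_toWord g
  set pieces := runs L with hpieces
  have hpne : ∀ w ∈ pieces, w ≠ [] := runs_ne_nil L
  have hpred : ∀ w ∈ pieces, IsRed w := fun w hw =>
    isRed_infix hLred (by rw [← runs_flatten L]; exact List.infix_of_mem_flatten hw)
  have hmkne : ∀ w ∈ pieces, ψ (FreeGroup.mk w) ≠ 1 := by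
    intro w hw h1
    have : FreeGroup.mk w = 1 := by
      have := ψ.injective (h1.trans (_root_.map_one ψ).symm)
      simpa using this
    rw [← FreeGroup.toWord_eq_nil_iff, toWord_mk' (hpred w hw)] at this
    exact hpne w hw this
  -- the image words
  set ws : List Wd := pieces.map (fun w => (ψ (FreeGroup.mk w)).toWord) with hws
  have hws0 : ∀ w ∈ ws, w ≠ [] := by
    intro w hw
    obtain ⟨u, hu, rfl⟩ := List.mem_map.1 hw
    rw [ne_eq, FreeGroup.toWord_eq_nil_iff]
    exact hmkne u hu
  have hws1 : ∀ w ∈ ws, IsRed w := by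
    intro w hw
    obtain ⟨u, hu, rfl⟩ := List.mem_map.1 hw
    exact isRed_toWord _
  have hws2 : List.IsChain J ws := by
    rw [hws, List.isChain_map]
    have hcc := chain'_conj (runs_alt L) (junctions_of_isRed_flatten hpne (by rw [runs_flatten L]; exact hLred))
    refine chain'_imp_mem hcc (P := fun w => (isL w ∨ ∀ x ∈ w, x.1 ≠ 0) ∧ w ≠ []) ?_ ?_
    · exact fun w hw => ⟨runs_kinds L w hw, hpne w hw⟩
    · rintro u v ⟨hu, hune⟩ ⟨hv, hvne⟩ ⟨halt, hJ⟩
      intro x hx y hy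
      rcases halt with hLu | hLv
      · obtain ⟨ε, rfl⟩ := hLu
        rw [img_letter ψ h0] at hx
        simp only [List.getLast?_singleton, Option.mem_def, Option.some_inj] at hx
        subst hx
        rcases hv with hLv | hcf
        · obtain ⟨δ, rfl⟩ := hLv
          rw [img_letter ψ h0] at hy
          simp only [List.head?_cons, Option.mem_def, Option.some_inj] at hy
          subst hy
          exact hJ _ (by simp) _ (by simp)
        · have : y ∈ (ψ (FreeGroup.mk v)).toWord := List.mem_of_mem_head? hy
          exact NC_of_ne (by have := hzf v hcf y this; simp; omega)
      · obtain ⟨δ, rfl⟩ := hLv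
        rw [img_letter ψ h0] at hy
        simp only [List.head?_cons, Option.mem_def, Option.some_inj] at hy
        subst hy
        rcases hu with hLu | hcf
        · obtain ⟨ε, rfl⟩ := hLu
          rw [img_letter ψ h0] at hx
          simp only [List.getLast?_singleton, Option.mem_def, Option.some_inj] at hx
          subst hx
          exact hJ _ (by simp) _ (by simp)
        · have : x ∈ (ψ (FreeGroup.mk u)).toWord :=
            List.mem_of_mem_getLast? hx
          exact NC_of_ne (by have := hzf u hcf x this; simpa using this)
  -- main word description
  have hg2 : ψ g = ((ws.map FreeGroup.mk)).prod := by
    have h1 : g = ((pieces.map FreeGroup.mk)).prod := by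
      rw [prod_mk, runs_flatten]
      exact (FreeGroup.mk_toWord).symm
    rw [h1, _root_.map_list_prod ψ (pieces.map FreeGroup.mk)]
    congr 1
    rw [hws, List.map_map, List.map_map]
    refine List.map_congr_left fun w hw => ?_
    simp [FreeGroup.mk_toWord]
  have hkey : (ψ g).toWord = ws.flatten := by
    rw [hg2]
    exact toWord_prod ws hws0 hws1 hws2
  constructor
  · rw [hkey]
    have h1 : pieces.head? = some [((0:ℕ), true)] := runs_first hhead rfl
    have h2 : ws.head? = some [((0:ℕ), true)] := by
      rw [hws, List.head?_map, h1]
      simp [img_letter ψ h0 true]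
    rw [head?_flatten_of_ne_nil h2 (by simp)]
    rfl
  · rw [hkey]
    have h1 : pieces.getLast? = some [((0:ℕ), false)] := runs_last hlast rfl
    have h2 : ws.getLast? = some [((0:ℕ), false)] := by
      rw [hws, List.getLast?_map, h1]
      simp [img_letter ψ h0 false]
    rw [getLast?_flatten_of_ne_nil h2 (by simp)]
    rfl

/-- generic inner-chain lemma for images of the pieces of a reduced word -/
lemma chain_inner (ψ : F →* F) (hinj : Function.Injective ψ) (n : ℕ)
    (hzf : ∀ w : Wd, (∀ x ∈ w, x.1 ≠ 0) → ZF n (ψ (FreeGroup.mk w)))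
    (hlet : ∀ ε, (ψ (FreeGroup.mk [((0:ℕ), ε)])).toWord = [((n:ℕ), ε)])
    {M : Wd} (hM : IsRed M) :
    List.IsChain J ((runs M).map (fun w => (ψ (FreeGroup.mk w)).toWord)) := by
  rw [List.isChain_map]
  have hpne : ∀ w ∈ runs M, w ≠ [] := runs_ne_nil M
  have hcc := chain'_conj (runs_alt M)
    (junctions_of_isRed_flatten hpne (by rw [runs_flatten M]; exact hM))
  refine chain'_imp_mem hcc (P := fun w => (isL w ∨ ∀ x ∈ w, x.1 ≠ 0) ∧ w ≠ []) ?_ ?_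
  · exact fun w hw => ⟨runs_kinds M w hw, hpne w hw⟩
  · rintro u v ⟨hu, hune⟩ ⟨hv, hvne⟩ ⟨halt, hJ⟩
    intro x hx y hy
    rcases halt with hLu | hLv
    · obtain ⟨ε, rfl⟩ := hLu
      rw [hlet] at hx
      simp only [List.getLast?_singleton, Option.mem_def, Option.some_inj] at hx
      subst hx
      rcases hv with hLv | hcf
      · obtain ⟨δ, rfl⟩ := hLv
        rw [hlet] at hy
        simp only [List.head?_cons, Option.mem_def, Option.some_inj] at hy
        subst hy
        intro _
        exact hJ ((0:ℕ), ε) (by simp) ((0:ℕ), δ) (by simp) rfl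
      · have : y ∈ (ψ (FreeGroup.mk v)).toWord := List.mem_of_mem_head? hy
        exact NC_of_ne (by have := hzf v hcf y this; simp; omega)
    · obtain ⟨δ, rfl⟩ := hLv
      rw [hlet] at hy
      simp only [List.head?_cons, Option.mem_def, Option.some_inj] at hy
      subst hy
      rcases hu with hLu | hcf
      · obtain ⟨ε, rfl⟩ := hLu
        rw [hlet] at hx
        simp only [List.getLast?_singleton, Option.mem_def, Option.some_inj] at hx
        subst hx
        intro _
        exact hJ ((0:ℕ), ε) (by simp) ((0:ℕ), δ) (by simp) rfl
      · have : x ∈ (ψ (FreeGroup.mk u)).toWord := List.mem_of_mem_getLast? hx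
        exact NC_of_ne (by have := hzf u hcf x this; simp; omega)

/-- the substitution `μ`: `x₀ ↦ x₁`, `x₁ ↦ x₀`, `xⱼ ↦ x₀⁻¹ xⱼ x₀` -/
def mimg (k : ℕ) : F :=
  if k = 0 then of 1 else if k = 1 then of 0 else (of 0)⁻¹ * of k * of 0

def mhom : F →* F := FreeGroup.lift mimg

lemma mhom_of (k : ℕ) : mhom (of k) = mimg k := FreeGroup.lift_apply_of

lemma art0_conj (g : F) : artAut 0 g = of 0 * mhom g * (of 0)⁻¹ := by
  have key : (artAut 0).toMonoidHom =
      ((MulAut.conj (of (0:ℕ))).toMonoidHom).comp mhom := by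
    refine FreeGroup.ext_hom _ _ fun k => ?_
    simp only [MulEquiv.coe_toMonoidHom, MonoidHom.comp_apply, mhom_of]
    show artAut 0 (of k) = of 0 * mimg k * (of 0)⁻¹
    rw [artAut_of]
    by_cases h0 : k = 0
    · subst k
      rw [aimg_self, mimg, if_pos rfl]
    by_cases h1 : k = 1
    · subst k
      rw [show (1:ℕ) = 0 + 1 from rfl, aimg_succ, mimg]
      norm_num
    · rw [aimg_other h0 (by omega), mimg, if_neg h0, if_neg h1]
      group
  have := DFunLike.congr_fun key g
  simpa using this

lemma mhom_inj : Function.Injective mhom := by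
  intro a b h
  have : artAut 0 a = artAut 0 b := by rw [art0_conj, art0_conj, h]
  exact (artAut 0).injective this

lemma mhom_letter (ε : Bool) :
    (mhom (FreeGroup.mk [((0:ℕ), ε)])).toWord = [((1:ℕ), ε)] := by
  cases ε
  · rw [mk_single_false, _root_.map_inv, mhom_of, mimg, if_pos rfl,
      FreeGroup.toWord_inv, FreeGroup.toWord_of]
    simp [FreeGroup.invRev]
  · rw [mk_single_true, mhom_of, mimg, if_pos rfl, FreeGroup.toWord_of]

lemma mhom_zf (k : ℕ) (h : k ≠ 0) : ZF 1 (mhom (of k)) := by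
  rw [mhom_of, mimg, if_neg h]
  by_cases h1 : k = 1
  · rw [if_pos h1]
    exact ZF.of (by omega)
  · rw [if_neg h1]
    exact (((ZF.of (show (0:ℕ) ≠ 1 by omega)).inv).mul (ZF.of h1)).mul
      (ZF.of (show (0:ℕ) ≠ 1 by omega))

lemma mhom_zf_chunk (w : Wd) (hw : ∀ x ∈ w, x.1 ≠ 0) : ZF 1 (mhom (FreeGroup.mk w)) :=
  ZF_chunk mhom mhom_zf w hw

lemma art0_inv {g : F} (hg : Inv g) : Inv (artAut 0 g) := by
  obtain ⟨hhead, hlast⟩ := hg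
  have hLred : IsRed g.toWord := isRed_toWord g
  -- decompose the word of g as (0,true) :: M ++ [(0,false)]
  obtain ⟨T, hT⟩ : ∃ T, g.toWord = ((0:ℕ), true) :: T := by
    rcases hL : g.toWord with _ | ⟨a, T⟩
    · rw [hL] at hhead; simp at hhead
    · rw [hL] at hhead
      simp only [List.head?_cons, Option.some_inj] at hhead
      exact ⟨T, by rw [hhead]⟩
  have hTne : T ≠ [] := by
    rintro rfl
    rw [hT] at hlast
    simp at hlast
  have hlastT : T.getLast? = some ((0:ℕ), false) := by
    rw [hT, show (((0:ℕ), true) :: T) = [((0:ℕ), true)] ++ T from rfl,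
      List.getLast?_append_of_ne_nil _ hTne] at hlast
    exact hlast
  obtain ⟨M, hM⟩ : ∃ M, T = M ++ [((0:ℕ), false)] := by
    refine ⟨T.dropLast, ?_⟩
    have h1 := List.dropLast_append_getLast hTne
    have h2 : T.getLast hTne = ((0:ℕ), false) := by
      rw [List.getLast?_eq_getLast hTne, Option.some_inj] at hlastT
      exact hlastT
    conv_lhs => rw [← h1]
    rw [h2]
  have hLdec : g.toWord = [((0:ℕ), true)] ++ M ++ [((0:ℕ), false)] := by
    rw [hT, hM]; rfl
  rw [hLdec] at hLred
  have hMred : IsRed M := isRed_infix hLred ⟨[((0:ℕ), true)], [((0:ℕ), false)], rfl⟩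
  have hMne : M ≠ [] := by
    rintro rfl
    have h2 : IsRed [((0:ℕ), true), ((0:ℕ), false)] := by simpa using hLred
    have h3 := (List.isChain_cons_cons.1 h2).1
    simp [NC] at h3
  -- boundary adjacency conditions
  have hMhead : ∀ y ∈ M.head?, NC ((0:ℕ), true) y := by
    have h1 : IsRed ([((0:ℕ), true)] ++ (M ++ [((0:ℕ), false)])) := by
      simpa using hLred
    have := (isChain_append.1 h1).2.2
    intro y hy
    refine this _ (by simp) y ?_
    rwa [List.head?_append_of_ne_nil _ hMne]
  have hMlast : ∀ x ∈ M.getLast?, NC x ((0:ℕ), false) := by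
    have h1 : IsRed (M ++ [((0:ℕ), false)]) := by
      have h' := hLred
      rw [List.append_assoc] at h'
      exact h'.right_of_append
    intro x hx
    exact (isChain_append.1 h1).2.2 x hx _ (by simp)
  -- factor g
  have hgfact : g = of 0 * FreeGroup.mk M * (of 0)⁻¹ := by
    conv_lhs => rw [← FreeGroup.mk_toWord (x := g), hLdec]
    rw [← FreeGroup.mul_mk, ← FreeGroup.mul_mk, mk_single_true, mk_single_false]
  -- pieces of M and their images
  have hpne : ∀ w ∈ runs M, w ≠ [] := runs_ne_nil M
  have hpred : ∀ w ∈ runs M, IsRed w := fun w hw =>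
    isRed_infix hMred (by rw [← runs_flatten M]; exact List.infix_of_mem_flatten hw)
  have himgne : ∀ w ∈ runs M, (mhom (FreeGroup.mk w)).toWord ≠ [] := by
    intro w hw h1
    rw [FreeGroup.toWord_eq_nil_iff] at h1
    have : FreeGroup.mk w = 1 := mhom_inj (by rw [h1, _root_.map_one])
    rw [← FreeGroup.toWord_eq_nil_iff, toWord_mk' (hpred w hw)] at this
    exact hpne w hw this
  have hzfimg : ∀ w ∈ runs M, ZF 1 (mhom (FreeGroup.mk w)) ∨ isL w := by
    intro w hw
    rcases runs_kinds M w hw with h | h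
    · exact Or.inr h
    · exact Or.inl (mhom_zf_chunk w h)
  -- the full list of words
  set ws : List Wd := (runs M).map (fun w => (mhom (FreeGroup.mk w)).toWord) with hws
  set WS : List Wd := [((0:ℕ), true)] :: [((1:ℕ), true)] :: (ws ++ [[((1:ℕ), false)], [((0:ℕ), false)]]) with hWS
  have hwsne : ws ≠ [] := by
    have : runs M ≠ [] := by
      intro h
      apply hMne
      rw [← runs_flatten M, h]; rfl
    simpa [hws] using this
  -- conditions on ws elements
  have hws0 : ∀ w ∈ ws, w ≠ [] := by
    intro w hw
    obtain ⟨u, hu, rfl⟩ := List.mem_map.1 hw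
    exact himgne u hu
  have hws1 : ∀ w ∈ ws, IsRed w := by
    intro w hw
    obtain ⟨u, hu, rfl⟩ := List.mem_map.1 hw
    exact isRed_toWord _
  have hwschain : List.IsChain J ws :=
    chain_inner mhom mhom_inj 1 mhom_zf_chunk mhom_letter hMred
  -- head and last of ws
  have hwshead : ∀ w ∈ ws.head?, ∀ y ∈ w.head?, NC ((1:ℕ), true) y := by
    intro w hw y hy
    obtain ⟨u, hu⟩ : ∃ u, (runs M).head? = some u ∧
        w = (mhom (FreeGroup.mk u)).toWord := by
      rcases hr : (runs M).head? with _ | u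
      · rw [hws, List.head?_map, hr] at hw; simp at hw
      · rw [hws, List.head?_map, hr] at hw
        simp only [Option.map_some, Option.mem_def, Option.some_inj] at hw
        exact ⟨u, rfl, hw.symm⟩
    obtain ⟨hu1, rfl⟩ := hu
    have humem : u ∈ runs M := List.mem_of_mem_head? hu1
    rcases runs_kinds M u humem with ⟨ε, rfl⟩ | hcf
    · -- first piece is a letter: it must be (0,true)
      have hMfirst : M.head? = some ((0:ℕ), ε) := by
        have := head?_flatten_of_ne_nil hu1 (by simp)
        rw [runs_flatten M] at this
        rw [this]; rfl
      have hε : ε = true := by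
        have := hMhead ((0:ℕ), ε) (by rw [hMfirst]; rfl)
        exact (this rfl).symm
      subst hε
      rw [mhom_letter] at hy
      simp only [List.head?_cons, Option.mem_def, Option.some_inj] at hy
      subst hy
      intro _; rfl
    · have : y ∈ (mhom (FreeGroup.mk u)).toWord := List.mem_of_mem_head? hy
      exact NC_of_ne (by have := mhom_zf_chunk u hcf y this; simp; omega)
  have hwslast : ∀ w ∈ ws.getLast?, ∀ x ∈ w.getLast?, NC x ((1:ℕ), false) := by
    intro w hw x hx
    obtain ⟨u, hu1, rfl⟩ : ∃ u, (runs M).getLast? = some u ∧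
        w = (mhom (FreeGroup.mk u)).toWord := by
      rcases hr : (runs M).getLast? with _ | u
      · rw [hws, List.getLast?_map, hr] at hw; simp at hw
      · rw [hws, List.getLast?_map, hr] at hw
        simp only [Option.map_some, Option.mem_def, Option.some_inj] at hw
        exact ⟨u, rfl, hw.symm⟩
    have hune : u ≠ [] := by
      have : u ∈ runs M := by
        have hrne : runs M ≠ [] := by rintro h; rw [h] at hu1; simp at hu1
        have : u = (runs M).getLast hrne := by
          rw [List.getLast?_eq_getLast hrne, Option.some_inj] at hu1; exact hu1.symm
        rw [this]; exact List.getLast_mem hrne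
      exact hpne u this
    have humem : u ∈ runs M := by
      have hrne : runs M ≠ [] := by rintro h; rw [h] at hu1; simp at hu1
      have : u = (runs M).getLast hrne := by
        rw [List.getLast?_eq_getLast hrne, Option.some_inj] at hu1; exact hu1.symm
      rw [this]; exact List.getLast_mem hrne
    rcases runs_kinds M u humem with ⟨ε, rfl⟩ | hcf
    · have hMlast' : M.getLast? = some ((0:ℕ), ε) := by
        have := getLast?_flatten_of_ne_nil hu1 (by simp)
        rw [runs_flatten M] at this
        rw [this]; rfl
      have hε : ε = false := by
        have := hMlast ((0:ℕ), ε) (by rw [hMlast']; rfl)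
        exact this rfl
      subst hε
      rw [mhom_letter] at hx
      simp only [List.getLast?_singleton, Option.mem_def, Option.some_inj] at hx
      subst hx
      intro _; rfl
    · have : x ∈ (mhom (FreeGroup.mk u)).toWord := List.mem_of_mem_getLast? hx
      exact NC_of_ne (by have := mhom_zf_chunk u hcf x this; simpa using this)
  -- factor artAut 0 g as the product of WS
  have hfact : artAut 0 g = ((WS.map FreeGroup.mk)).prod := by
    have h1 : mhom (FreeGroup.mk M) = ((ws.map FreeGroup.mk)).prod := by
      have h2 : FreeGroup.mk M = (((runs M).map FreeGroup.mk)).prod := by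
        rw [prod_mk, runs_flatten]
      rw [h2, _root_.map_list_prod mhom]
      congr 1
      rw [hws, List.map_map, List.map_map]
      refine List.map_congr_left fun w hw => ?_
      simp [FreeGroup.mk_toWord]
    rw [hgfact]
    simp only [_root_.map_mul, _root_.map_inv]
    rw [art0_conj (FreeGroup.mk M), h1]
    have ha0 : artAut 0 (of 0) = of 0 * of 1 * (of 0)⁻¹ := by
      rw [artAut_of, aimg_self]
    rw [ha0]
    rw [hWS]
    simp only [List.map_cons, List.map_append, List.prod_cons, List.prod_append,
      mk_single_true, mk_single_false, List.map_nil, List.prod_nil]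
    group
  -- apply the master product lemma
  have hWS0 : ∀ w ∈ WS, w ≠ [] := by
    intro w hw
    rw [hWS] at hw
    rcases List.mem_cons.1 hw with rfl | hw
    · simp
    rcases List.mem_cons.1 hw with rfl | hw
    · simp
    rcases List.mem_append.1 hw with hw | hw
    · exact hws0 w hw
    · rcases List.mem_cons.1 hw with rfl | hw
      · simp
      · rcases List.mem_cons.1 hw with rfl | hw
        · simp
        · simp at hw
  have hWS1 : ∀ w ∈ WS, IsRed w := by
    intro w hw
    rw [hWS] at hw
    rcases List.mem_cons.1 hw with rfl | hw
    · exact List.isChain_singleton _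
    rcases List.mem_cons.1 hw with rfl | hw
    · exact List.isChain_singleton _
    rcases List.mem_append.1 hw with hw | hw
    · exact hws1 w hw
    · rcases List.mem_cons.1 hw with rfl | hw
      · exact List.isChain_singleton _
      · rcases List.mem_cons.1 hw with rfl | hw
        · exact List.isChain_singleton _
        · simp at hw
  have hWS2 : List.IsChain J WS := by
    rw [hWS]
    refine List.isChain_cons.2 ⟨?_, ?_⟩
    · -- J [(0,true)] [(1,true)]
      intro y hy
      simp only [List.head?_cons, Option.mem_def, Option.some_inj] at hy
      subst hy
      intro x hx y' hy'
      simp only [List.getLast?_singleton, Option.mem_def, Option.some_inj] at hx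
      simp only [List.head?_cons, Option.mem_def, Option.some_inj] at hy'
      subst hx; subst hy'
      exact NC_of_ne (by simp)
    refine List.isChain_cons.2 ⟨?_, ?_⟩
    · -- J [(1,true)] (first of ws)
      intro y hy
      rw [List.head?_append_of_ne_nil _ hwsne] at hy
      intro x hx y' hy'
      simp only [List.getLast?_singleton, Option.mem_def, Option.some_inj] at hx
      subst hx
      exact hwshead y hy y' hy'
    refine isChain_append.2 ⟨hwschain, ?_, ?_⟩
    · -- chain of the two last singletons
      refine List.isChain_cons.2 ⟨?_, List.isChain_singleton _⟩
      intro y hy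
      simp only [List.head?_cons, Option.mem_def, Option.some_inj] at hy
      subst hy
      intro x hx y' hy'
      simp only [List.getLast?_singleton, Option.mem_def, Option.some_inj] at hx
      simp only [List.head?_cons, Option.mem_def, Option.some_inj] at hy'
      subst hx; subst hy'
      exact NC_of_ne (by simp)
    · -- J (last of ws) [(1,false)]
      intro w hw y hy
      simp only [List.head?_cons, Option.mem_def, Option.some_inj] at hy
      subst hy
      intro x hx y' hy'
      simp only [List.head?_cons, Option.mem_def, Option.some_inj] at hy'
      subst hy'
      exact hwslast w hw x hx
  have hkey : (artAut 0 g).toWord = WS.flatten := by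
    rw [hfact]
    exact toWord_prod WS hWS0 hWS1 hWS2
  constructor
  · rw [hkey, hWS]
    rfl
  · rw [hkey]
    have hsplit : WS.flatten =
        ([((0:ℕ), true)] ++ [((1:ℕ), true)] ++ ws.flatten ++ [((1:ℕ), false)]) ++ [((0:ℕ), false)] := by
      rw [hWS]
      simp [List.flatten_cons, List.flatten_append]
    rw [hsplit, List.getLast?_append_of_ne_nil _ (by simp)]
    rfl

/-- automorphisms fixing `x₀` and preserving the invariant -/
def Good (φ : MulAut F) : Prop := φ (of 0) = of 0 ∧ ∀ g, Inv g → Inv (φ g)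

/-- `Good` for the automorphism and its inverse -/
def GoodP (φ : MulAut F) : Prop := Good φ ∧ Good φ⁻¹

lemma GoodP.one : GoodP 1 := by
  constructor <;> simp [Good, MulAut.one_apply] <;> exact fun g h => h

lemma GoodP.mul {φ ψ : MulAut F} (h1 : GoodP φ) (h2 : GoodP ψ) : GoodP (φ * ψ) := by
  obtain ⟨⟨f1, p1⟩, ⟨f1', p1'⟩⟩ := h1
  obtain ⟨⟨f2, p2⟩, ⟨f2', p2'⟩⟩ := h2
  refine ⟨⟨?_, ?_⟩, ?_⟩
  · rw [MulAut.mul_apply, f2, f1]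
  · intro g hg
    rw [MulAut.mul_apply]
    exact p1 _ (p2 _ hg)
  · rw [mul_inv_rev]
    exact ⟨by rw [MulAut.mul_apply, f1', f2'], fun g hg => by
      rw [MulAut.mul_apply]; exact p2' _ (p1' _ hg)⟩

lemma GoodP.inv {φ : MulAut F} (h : GoodP φ) : GoodP φ⁻¹ :=
  ⟨h.2, by rw [inv_inv]; exact h.1⟩

lemma goodP_artAut {i : ℕ} (hi : 1 ≤ i) : GoodP (artAut i) := by
  constructor
  · refine ⟨?_, ?_⟩
    · rw [artAut_of, aimg_other (by omega) (by omega)]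
    · intro g hg
      refine image_inv (artAut i) ?_ ?_ hg
      · rw [artAut_of, aimg_other (by omega) (by omega)]
      · intro k hk
        rw [artAut_of]
        by_cases h1 : k = i
        · subst k
          rw [aimg_self]
          exact ((ZF.of (by omega)).mul (ZF.of (by omega))).mul (ZF.of (by omega)).inv
        by_cases h2 : k = i + 1
        · subst k
          rw [aimg_succ]
          exact ZF.of (by omega)
        · rw [aimg_other h1 h2]
          exact ZF.of hk
  · rw [MulAut.inv_def]
    refine ⟨?_, ?_⟩
    · rw [artAut_symm_of, bimg_other (by omega) (by omega)]
    · intro g hg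
      refine image_inv (artAut i).symm ?_ ?_ hg
      · rw [artAut_symm_of, bimg_other (by omega) (by omega)]
      · intro k hk
        rw [artAut_symm_of]
        by_cases h1 : k = i
        · subst k
          rw [bimg_self]
          exact ZF.of (by omega)
        by_cases h2 : k = i + 1
        · subst k
          rw [bimg_succ]
          exact (((ZF.of (by omega)).inv).mul (ZF.of (by omega))).mul (ZF.of (by omega))
        · rw [bimg_other h1 h2]
          exact ZF.of hk

lemma good_art0 : ∀ g, Inv g → Inv (artAut 0 g) := fun _ => art0_inv

/-- the representation of braid letters -/
def rho : FreeGroup ℕ →* MulAut F := FreeGroup.lift artAut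

lemma rho_of (i : ℕ) : rho (of i) = artAut i := FreeGroup.lift_apply_of

/-- evaluation of LD terms into shifted braid words -/
def ev : FreeMagma Unit → ℕ → FreeGroup ℕ
  | .of _, _ => 1
  | .mul a b, n => ev a n * ev b (n+1) * of n * (ev a (n+1))⁻¹

lemma ev_of (n : ℕ) : ev (FreeMagma.of ()) n = 1 := rfl

lemma ev_mul (a b : FreeMagma Unit) (n : ℕ) :
    ev (a * b) n = ev a n * ev b (n+1) * of n * (ev a (n+1))⁻¹ := rfl

lemma goodP_ev (t : FreeMagma Unit) : ∀ n, 1 ≤ n → GoodP (rho (ev t n)) := by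
  induction t with
  | ih1 _ => intro n _; rw [ev_of, _root_.map_one]; exact GoodP.one
  | ih2 a b iha ihb =>
    intro n hn
    rw [ev_mul]
    simp only [_root_.map_mul, _root_.map_inv, rho_of]
    exact ((((iha n hn).mul (ihb (n+1) (by omega)))).mul (goodP_artAut hn)).mul
      ((iha (n+1) (by omega)).inv)

lemma commute_ev (i : ℕ) (t : FreeMagma Unit) : ∀ n, i + 2 ≤ n →
    Commute (artAut i) (rho (ev t n)) := by
  induction t with
  | ih1 _ => intro n _; rw [ev_of, _root_.map_one]; exact Commute.one_right _
  | ih2 a b iha ihb =>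
    intro n hn
    rw [ev_mul]
    simp only [_root_.map_mul, _root_.map_inv, rho_of]
    exact (((iha n hn).mul_right (ihb (n+1) (by omega))).mul_right
      (comm_rel hn)).mul_right ((iha (n+1) (by omega)).inv_right)

lemma key_group {G : Type*} [Group G] (A0 B1 C2 A1 A2 B2 s t : G)
    (h1 : s * C2 = C2 * s) (h2 : s * B2 = B2 * s) (h3 : s * A2 = A2 * s)
    (hb : s * t * s = t * s * t) :
    A0 * (B1 * C2 * t * B2⁻¹) * s * A1⁻¹ =
      A0 * B1 * s * A1⁻¹ * (A1 * C2 * t * A2⁻¹) * s * (A1 * B2 * t * A2⁻¹)⁻¹ := by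
  have e1 : ∀ X : G, s * (C2 * X) = C2 * (s * X) := fun X => by
    rw [← mul_assoc, h1, mul_assoc]
  have e2 : ∀ X : G, s * (B2⁻¹ * X) = B2⁻¹ * (s * X) := fun X => by
    have h2' : s * B2⁻¹ = B2⁻¹ * s := ((show Commute s B2 from h2).inv_right).eq
    rw [← mul_assoc, h2', mul_assoc]
  have e3 : ∀ X : G, s * (A2 * X) = A2 * (s * X) := fun X => by
    rw [← mul_assoc, h3, mul_assoc]
  have eb : ∀ X : G, s * (t * (s * (t⁻¹ * X))) = t * (s * X) := fun X => by
    calc s * (t * (s * (t⁻¹ * X))) = (s * t * s) * (t⁻¹ * X) := by group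
    _ = (t * s * t) * (t⁻¹ * X) := by rw [hb]
    _ = t * (s * X) := by group
  simp only [mul_inv_rev, inv_inv, mul_assoc]
  rw [inv_mul_cancel_left]
  -- now push s through
  rw [e1, e3]
  rw [show A2⁻¹ * (A2 * (s * (t⁻¹ * (B2⁻¹ * A1⁻¹)))) = s * (t⁻¹ * (B2⁻¹ * A1⁻¹)) from
    inv_mul_cancel_left _ _]
  rw [eb, e2]

lemma ld_eq (a b c : FreeMagma Unit) (n : ℕ) :
    rho (ev (a * (b * c)) n) = rho (ev ((a * b) * (a * c)) n) := by
  simp only [ev_mul, _root_.map_mul, _root_.map_inv, rho_of]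
  exact key_group (rho (ev a n)) (rho (ev b (n+1))) (rho (ev c (n+2))) (rho (ev a (n+1)))
    (rho (ev a (n+2))) (rho (ev b (n+2))) (artAut n) (artAut (n+1))
    ((commute_ev n c (n+2) le_rfl).eq) ((commute_ev n b (n+2) le_rfl).eq)
    ((commute_ev n a (n+2) le_rfl).eq) (braid_rel n)

lemma inv_base : Inv (artAut 0 (of 0)) := by
  have h1 : artAut 0 (of 0) = FreeGroup.mk [((0:ℕ), true), ((1:ℕ), true), ((0:ℕ), false)] := by
    rw [artAut_of, aimg_self,
      show (of (0:ℕ))⁻¹ = FreeGroup.mk [((0:ℕ), false)] from (mk_single_false 0).symm,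
      ← mk_single_true 0, ← mk_single_true 1, FreeGroup.mul_mk, FreeGroup.mul_mk]
    rfl
  have h2 : IsRed [((0:ℕ), true), ((1:ℕ), true), ((0:ℕ), false)] := by
    refine List.isChain_cons_cons.2 ⟨NC_of_ne (by simp), ?_⟩
    exact List.isChain_cons_cons.2 ⟨NC_of_ne (by simp), List.isChain_singleton _⟩
  constructor
  · rw [h1, toWord_mk' h2]; rfl
  · rw [h1, toWord_mk' h2]; rfl

/-- the invariant congruence -/
def ldc : Con (FreeMagma Unit) where
  r := fun t s => ∀ n, rho (ev t n) = rho (ev s n)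
  iseqv := ⟨fun _ _ => rfl, fun h n => (h n).symm, fun h1 h2 n => (h1 n).trans (h2 n)⟩
  mul' := by
    intro w x y z h1 h2 n
    rw [ev_mul, ev_mul]
    simp only [_root_.map_mul, _root_.map_inv]
    rw [h1 n, h1 (n+1), h2 (n+1)]

lemma step_inv (p q : FreeMagma Unit) {V : F} (hV : Inv V) :
    (rho (ev q 1 * of 0 * (ev p 1)⁻¹)) V |> Inv := by
  simp only [_root_.map_mul, _root_.map_inv, rho_of]
  rw [MulAut.mul_apply, MulAut.mul_apply]
  exact (goodP_ev q 1 le_rfl).1.2 _ (art0_inv ((goodP_ev p 1 le_rfl).2.2 V hV))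

lemma pos_inv : ∀ (lw : List (FreeMagma Unit)), lw ≠ [] → ∀ (p : FreeMagma Unit),
    Inv ((rho ((ev p 0)⁻¹ * ev (List.foldl (· * ·) p lw) 0)) (of 0)) := by
  intro lw
  induction lw with
  | nil => intro h; exact absurd rfl h
  | cons q lw ih =>
    intro _ p
    rw [List.foldl_cons]
    rcases eq_or_ne lw [] with rfl | hlw
    · rw [List.foldl_nil]
      rw [show (ev p 0)⁻¹ * ev (p * q) 0 = ev q 1 * of 0 * (ev p 1)⁻¹ from by
        rw [ev_mul]; group]
      simp only [_root_.map_mul, _root_.map_inv, rho_of]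
      rw [MulAut.mul_apply, MulAut.mul_apply]
      have hfix : ((rho (ev p 1))⁻¹) (of 0) = of 0 := (goodP_ev p 1 le_rfl).2.1
      rw [hfix]
      exact (goodP_ev q 1 le_rfl).1.2 _ inv_base
    · have key : (ev p 0)⁻¹ * ev (List.foldl (· * ·) (p * q) lw) 0
          = ((ev p 0)⁻¹ * ev (p * q) 0) *
            ((ev (p * q) 0)⁻¹ * ev (List.foldl (· * ·) (p * q) lw) 0) := by group
      rw [key, _root_.map_mul, MulAut.mul_apply]
      have hV := ih hlw (p * q)
      rw [show (ev p 0)⁻¹ * ev (p * q) 0 = ev q 1 * of 0 * (ev p 1)⁻¹ from by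
        rw [ev_mul]; group]
      exact step_inv p q hV

lemma not_inv_of0 : ¬ Inv (of 0) := by
  intro h
  have := h.2
  rw [FreeGroup.toWord_of] at this
  simp at this

end LDIrr

/-- the canonical map to the quotient -/
def qmk (t : FreeMagma Unit) : FreeLD := (t : FreeLD)

lemma qmk_mul (a b : FreeMagma Unit) : qmk (a * b) = qmk a * qmk b := Con.coe_mul _ _

open LDIrr in
lemma ldCon_le_ldc : ldCon ≤ LDIrr.ldc := by
  apply Con.conGen_le.2
  rintro x y ⟨a, b, c⟩
  intro n
  exact LDIrr.ld_eq a b c n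

lemma list_lift (l : List FreeLD) : ∃ lw : List (FreeMagma Unit),
    lw.map qmk = l := by
  induction l with
  | nil => exact ⟨[], rfl⟩
  | cons x l ih =>
    obtain ⟨lw, h⟩ := ih
    obtain ⟨t, ht⟩ := Quot.exists_rep x
    exact ⟨t :: lw, by rw [List.map_cons, h]; congr 1⟩

lemma foldl_coe (lw : List (FreeMagma Unit)) : ∀ p : FreeMagma Unit,
    (lw.map qmk).foldl (· * ·) (qmk p) = qmk (lw.foldl (· * ·) p) := by
  induction lw with
  | nil => intro p; rfl
  | cons q lw ih =>
    intro p
    rw [List.map_cons, List.foldl_cons, List.foldl_cons, ← qmk_mul]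
    exact ih (p * q)

/-- Irreflexivity in the free left-distributive algebra on one generator:
`P ≠ (((P·Q₁)·Q₂)·…)·Q_k` for every `k ≥ 1`; consequently the strict-prefix
relation `<_L` is irreflexive. -/
theorem freeLD_irreflexive :
    (∀ (k : ℕ), 1 ≤ k → ∀ (P : FreeLD) (Q : Fin k → FreeLD),
      P ≠ (List.ofFn Q).foldl (· * ·) P) ∧
    (∀ P : FreeLD,
      ¬ ∃ (k : ℕ) (_ : 1 ≤ k) (Q : Fin k → FreeLD),
        P = (List.ofFn Q).foldl (· * ·) P) := by
  have main : ∀ (k : ℕ), 1 ≤ k → ∀ (P : FreeLD) (Q : Fin k → FreeLD),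
      P ≠ (List.ofFn Q).foldl (· * ·) P := by
    intro k hk P Q hEq
    obtain ⟨lw, hlw⟩ := list_lift (List.ofFn Q)
    obtain ⟨p, hp⟩ := Quot.exists_rep P
    have hpc : qmk p = P := hp
    have hlwne : lw ≠ [] := by
      intro h
      rw [h] at hlw
      have : (List.ofFn Q).length = 0 := by rw [← hlw]; rfl
      rw [List.length_ofFn] at this
      omega
    rw [← hpc, ← hlw, foldl_coe] at hEq
    have hrel : ldCon p (lw.foldl (· * ·) p) := ldCon.eq.1 hEq
    have hC : ∀ n, LDIrr.rho (LDIrr.ev p n) = LDIrr.rho (LDIrr.ev (lw.foldl (· * ·) p) n) :=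
      ldCon_le_ldc hrel
    have h1 : LDIrr.rho ((LDIrr.ev p 0)⁻¹ * LDIrr.ev (lw.foldl (· * ·) p) 0) = 1 := by
      rw [_root_.map_mul, _root_.map_inv, ← hC 0, inv_mul_cancel]
    have h2 := LDIrr.pos_inv lw hlwne p
    rw [h1, MulAut.one_apply] at h2
    exact LDIrr.not_inv_of0 h2
  exact ⟨main, fun P ⟨k, hk, Q, hEq⟩ => main k hk P Q hEq⟩
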